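/- Let α ∈ ℚ̄ satisfy α² − α − 1/2 = 0. Let (x_n,y_n)_{n≥0} be any sequence in ℚ̄² such that (x_0,y_0) = (α,α), (x_1,y_1) = (α,−α), (x_2,y_2) = (−α,α), x_3 = α and y_3² = α⁴/(1/2 − α), and for every n ≥ 4: y_n ≠ 0, x_{n−1} = x_n⁴/y_n² − 1/2, and y_{n−1} = x_n. Then the degrees [ℚ(x_n,y_n) : ℚ] of the number fields generated by the coordinates tend to infinity as n → ∞; that is, for every N there is an M such that [ℚ(x_n,y_n) : ℚ] > N for all n ≥ M. -/

import Mathlib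

open Multiplicative IsDedekindDomain IsDedekindDomain.HeightOneSpectrum NumberField

/-- A fixed algebraic closure of `ℚ`. -/
noncomputable def Qbar : Type := AlgebraicClosure ℚ

noncomputable instance : Field Qbar := inferInstanceAs (Field (AlgebraicClosure ℚ))
noncomputable instance : Algebra ℚ Qbar := inferInstanceAs (Algebra ℚ (AlgebraicClosure ℚ))

instance : CharZero Qbar := inferInstanceAs (CharZero (AlgebraicClosure ℚ))
instance : Algebra.IsAlgebraic ℚ Qbar :=
  AlgebraicClosure.isAlgebraic (k := ℚ)

/-! ### Auxiliary rational sequence -/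

def rho : ℕ → ℚ
  | 0 => 0
  | 1 => 1/2
  | (n+2) => 2 * rho (n+1) - rho n / 2

lemma rho_pos_mono : ∀ i : ℕ, 0 < rho (i+1) ∧ rho (i+1) ≤ rho (i+2) := by
  intro i
  induction i with
  | zero => norm_num [rho]
  | succ j ih =>
    obtain ⟨h1, h2⟩ := ih
    constructor
    · linarith
    · show rho (j+2) ≤ 2 * rho (j+2) - rho (j+1) / 2
      linarith

lemma rho_parity : ∀ t : ℕ, ∃ a b : ℤ, Odd b ∧ rho (2*t) = a / 2^t ∧ rho (2*t+1) = b / 2^(t+1) := by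
  intro t
  induction t with
  | zero => exact ⟨0, 1, odd_one, by norm_num [rho], by norm_num [rho]⟩
  | succ r ih =>
    obtain ⟨a, b, hb, ha2, hb2⟩ := ih
    refine ⟨2*b - a, 7*b - 4*a, by rcases hb with ⟨c, hc⟩; exact ⟨7*c + 3 - 2*a, by omega⟩, ?_, ?_⟩
    · rw [show 2*(r+1) = (2*r) + 2 from by ring, rho, ha2, hb2]
      push_cast
      field_simp
      ring
    · rw [show 2*(r+1)+1 = (2*r+1) + 2 from by ring, rho,
        show 2*r+1+1 = (2*r) + 2 from by ring, rho, ha2, hb2]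
      push_cast
      field_simp
      ring

/-! ### Additive version of a `ℤₘ₀`-valued valuation -/

section WVal

variable {F : Type*} [Field F] (v : Valuation F (WithZero (Multiplicative ℤ)))

/-- Additive version of the valuation `v`. -/
noncomputable def WVal (x : F) : ℤ :=
  if h : v x = 0 then 0 else -Multiplicative.toAdd (WithZero.unzero h)

lemma WVal_spec {x : F} (hx : x ≠ 0) :
    v x = ((Multiplicative.ofAdd (-(WVal v x)) : Multiplicative ℤ) :
      WithZero (Multiplicative ℤ)) := by
  have h : v x ≠ 0 := v.ne_zero_iff.mpr hx
  rw [WVal, dif_neg h, neg_neg, ofAdd_toAdd, WithZero.coe_unzero]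

lemma WVal_eq_of_v {x : F} (hx : x ≠ 0) {a : ℤ}
    (h : v x = ((Multiplicative.ofAdd (-a) : Multiplicative ℤ) :
      WithZero (Multiplicative ℤ))) :
    WVal v x = a := by
  have h1 := (WVal_spec v hx).symm.trans h
  have h2 := WithZero.coe_inj.mp h1
  have h3 : -(WVal v x) = -a := by exact_mod_cast congrArg Multiplicative.toAdd h2
  omega

lemma WVal_one : WVal v 1 = 0 := by
  refine WVal_eq_of_v v one_ne_zero ?_
  rw [v.map_one, neg_zero, ofAdd_zero, WithZero.coe_one]

lemma WVal_mul {x y : F} (hx : x ≠ 0) (hy : y ≠ 0) :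
    WVal v (x * y) = WVal v x + WVal v y := by
  refine WVal_eq_of_v v (mul_ne_zero hx hy) ?_
  rw [v.map_mul, WVal_spec v hx, WVal_spec v hy, ← WithZero.coe_mul, ← ofAdd_add, neg_add]

lemma WVal_pow {x : F} (hx : x ≠ 0) (k : ℕ) : WVal v (x ^ k) = k * WVal v x := by
  induction k with
  | zero =>
    simp only [pow_zero, Nat.cast_zero, zero_mul]
    exact WVal_one v
  | succ m ih =>
    rw [pow_succ, WVal_mul v (pow_ne_zero m hx) hx, ih]
    push_cast; ring

lemma WVal_neg (x : F) : WVal v (-x) = WVal v x := by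
  simp only [WVal, v.map_neg]

lemma WVal_inv {x : F} (hx : x ≠ 0) : WVal v x⁻¹ = -WVal v x := by
  refine WVal_eq_of_v v (inv_ne_zero hx) ?_
  rw [map_inv₀, WVal_spec v hx, ← WithZero.coe_inv, ← ofAdd_neg, neg_neg]

lemma WVal_add {x y : F} (hx : x ≠ 0) (hy : y ≠ 0) (hlt : WVal v x < WVal v y) :
    x + y ≠ 0 ∧ WVal v (x + y) = WVal v x := by
  have hvlt : v y < v x := by
    rw [WVal_spec v hx, WVal_spec v hy, WithZero.coe_lt_coe, ofAdd_lt]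
    omega
  have hne : v x ≠ v y := ne_of_gt hvlt
  have hsum : v (x + y) = v x := by
    rw [v.map_add_of_distinct_val hne, sup_eq_left]
    exact le_of_lt hvlt
  have hxy : x + y ≠ 0 := by
    intro h
    rw [h, v.map_zero] at hsum
    exact (v.ne_zero_iff.mpr hx) hsum.symm
  exact ⟨hxy, WVal_eq_of_v v hxy (hsum.trans (WVal_spec v hx))⟩

end WVal

/-! ### Ramification of 3 is bounded by the degree -/

section Ram

variable (F : Type*) [Field F] [NumberField F]

lemma absNorm_span_three :
    Ideal.absNorm (Ideal.span {(3 : 𝓞 F)}) = 3 ^ Module.finrank ℚ F := by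
  have hb := Module.Free.chooseBasis ℤ (𝓞 F)
  have h3 : (3 : 𝓞 F) = algebraMap ℤ (𝓞 F) 3 := by norm_num
  rw [Ideal.absNorm_span_singleton, h3, Algebra.norm_algebraMap_of_basis hb,
    ← Module.finrank_eq_card_chooseBasisIndex, RingOfIntegers.rank]
  rw [Int.natAbs_pow]
  norm_num

lemma span_three_ne_top : Ideal.span {(3 : 𝓞 F)} ≠ ⊤ := by
  intro h
  have h1 := absNorm_span_three F
  rw [h, Ideal.absNorm_top] at h1
  have h2 : 1 ≤ Module.finrank ℚ F := Module.finrank_pos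
  have : (3:ℕ) ^ 1 ≤ 3 ^ Module.finrank ℚ F := Nat.pow_le_pow_right (by norm_num) h2
  omega

lemma ram_le_finrank (P : HeightOneSpectrum (𝓞 F)) (n : ℕ)
    (h : P.asIdeal ^ n ∣ Ideal.span {(3 : 𝓞 F)}) : n ≤ Module.finrank ℚ F := by
  rcases Nat.eq_zero_or_pos n with hn | hn
  · omega
  set d := Module.finrank ℚ F with hd
  have hle : Ideal.span {(3 : 𝓞 F)} ≤ P.asIdeal ^ n := Ideal.le_of_dvd h
  have hdvd : Ideal.absNorm (P.asIdeal ^ n) ∣ Ideal.absNorm (Ideal.span {(3 : 𝓞 F)}) :=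
    Ideal.absNorm_dvd_absNorm_of_le hle
  rw [map_pow, absNorm_span_three F] at hdvd
  set q := Ideal.absNorm P.asIdeal with hq
  have hq1 : q ≠ 1 := by
    rw [hq, Ne, Ideal.absNorm_eq_one_iff]
    exact P.isPrime.ne_top
  have hqd : q ∣ 3 ^ d := dvd_trans (dvd_pow_self q hn.ne') hdvd
  obtain ⟨j, hj, hje⟩ := (Nat.dvd_prime_pow (by norm_num)).mp hqd
  have hj1 : 1 ≤ j := by
    rcases Nat.eq_zero_or_pos j with h0 | h0
    · rw [h0, pow_zero] at hje; exact absurd hje hq1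
    · exact h0
  have hq3 : 3 ≤ q := by
    calc (3:ℕ) = 3 ^ 1 := (pow_one 3).symm
    _ ≤ 3 ^ j := Nat.pow_le_pow_right (by norm_num) hj1
    _ = q := hje.symm
  have h3n : (3:ℕ) ^ n ≤ q ^ n := Nat.pow_le_pow_left hq3 n
  have hqn : q ^ n ≤ 3 ^ d := Nat.le_of_dvd (by positivity) hdvd
  have h33 : (3:ℕ) ^ n ≤ 3 ^ d := le_trans h3n hqn
  exact (Nat.pow_le_pow_iff_right (by norm_num)).mp h33

end Ram

set_option maxHeartbeats 2000000

/-- Let `α ∈ ℚ̄` with `α² - α - 1/2 = 0`, and let `(x_n,y_n)_{n≥0}` be a backward orbit of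
`(α,α)` under `f_{4,2}(x,y) = (x⁴/y² - 1/2, x)` whose first four terms are the prescribed
`(α,α), (α,-α), (-α,α), (α, (α⁴/(1/2-α))^{1/2})` and which is arbitrary thereafter.  Then
the degrees `[ℚ(x_n,y_n) : ℚ]` tend to infinity as `n → ∞`. -/
theorem stmt19 (α : Qbar) (hα : α ^ 2 - α - (2 : Qbar)⁻¹ = 0)
    (s : ℕ → Qbar × Qbar)
    (h0 : s 0 = (α, α)) (h1 : s 1 = (α, -α)) (h2 : s 2 = (-α, α))
    (h3x : (s 3).1 = α) (h3y : (s 3).2 ^ 2 = α ^ 4 / ((2 : Qbar)⁻¹ - α))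
    (hrec : ∀ n, 4 ≤ n → (s n).2 ≠ 0 ∧
      (s (n - 1)).1 = (s n).1 ^ 4 / (s n).2 ^ 2 - (2 : Qbar)⁻¹ ∧
      (s (n - 1)).2 = (s n).1) :
    ∀ N : ℕ, ∃ M : ℕ, ∀ n, M ≤ n →
      N < Module.finrank ℚ
        (IntermediateField.adjoin ℚ {(s n).1, (s n).2} : IntermediateField ℚ Qbar) := by
  -- basic facts in Qbar
  have h2Q : (2:Qbar) ≠ 0 := two_ne_zero
  have h2Q' : (2:Qbar) * (2:Qbar)⁻¹ = 1 := mul_inv_cancel₀ h2Q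
  have hαne : α ≠ 0 := by
    intro h
    rw [h] at hα
    have hz : (2:Qbar)⁻¹ = 0 := by linear_combination -hα
    exact h2Q (inv_eq_zero.mp hz)
  have hhalfα : (2:Qbar)⁻¹ - α ≠ 0 := by
    intro h
    have hαv : α = (2:Qbar)⁻¹ := by linear_combination -h
    rw [hαv] at hα
    have h3 : (3:Qbar) = 0 := by linear_combination (-4)*hα + (2*(2:Qbar)⁻¹ - 3) * h2Q'
    norm_num at h3
  have hgQ : (2*α - 1)^2 = 3 := by linear_combination 4*hα + 2*h2Q'
  -- the orbit relations in Qbar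
  have RQ3 : (s 3).2^2 * ((2:Qbar)⁻¹ - α) = α^4 := by
    rw [h3y]; exact div_mul_cancel₀ _ hhalfα
  have RQ4 : (s 4).2^2 * (α + (2:Qbar)⁻¹) = (s 3).2^4 := by
    obtain ⟨hy0, hxrec, hyrec⟩ := hrec 4 (by norm_num)
    simp only [show (4:ℕ)-1 = 3 from rfl] at hxrec hyrec
    rw [h3x] at hxrec
    rw [hyrec, hxrec]
    field_simp
    ring
  have RQ : ∀ k, 5 ≤ k → (s k).2^2 * ((s (k-2)).2 + (2:Qbar)⁻¹) = (s (k-1)).2^4 := by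
    intro k h5
    obtain ⟨hy0, hxrec, hyrec⟩ := hrec k (by omega)
    obtain ⟨-, -, hyrec'⟩ := hrec (k-1) (by omega)
    rw [show k-1-1 = k-2 from by omega] at hyrec'
    rw [hyrec', hxrec, hyrec]
    field_simp
    ring
  have hsy3 : (s 3).2 ≠ 0 := by
    intro h
    have hne : α^4 / ((2:Qbar)⁻¹ - α) ≠ 0 := div_ne_zero (pow_ne_zero 4 hαne) hhalfα
    apply hne
    rw [← h3y, h]
    norm_num
  have hsy : ∀ k, 3 ≤ k → (s k).2 ≠ 0 := by
    intro k hk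
    rcases Nat.lt_or_ge k 4 with h4 | h4
    · have : k = 3 := by omega
      rw [this]; exact hsy3
    · exact (hrec k h4).1
  intro N
  refine ⟨2*N + 6, fun n hn => ?_⟩
  set F := (IntermediateField.adjoin ℚ {(s n).1, (s n).2} : IntermediateField ℚ Qbar) with hFdef
  haveI hFD : FiniteDimensional ℚ F :=
    IntermediateField.finiteDimensional_adjoin
      (fun x _ => (Algebra.IsAlgebraic.isAlgebraic x).isIntegral)
  haveI : CharZero F := charZero_of_injective_algebraMap (algebraMap ℚ F).injective
  haveI : NumberField F := ⟨⟩
  have hinj : Function.Injective ((↑) : F → Qbar) := Subtype.coe_injective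
  -- coercion of numerals
  have hcoe2 : ((2:F) : Qbar) = 2 := by
    rw [show (2:F) = ((2:ℕ):F) by norm_cast, SubringClass.coe_natCast]; norm_num
  have hcoe3 : ((3:F) : Qbar) = 3 := by
    rw [show (3:F) = ((3:ℕ):F) by norm_cast, SubringClass.coe_natCast]; norm_num
  have h2F : (2:F) ≠ 0 := by
    intro h
    have := hcoe2
    rw [h, ZeroMemClass.coe_zero] at this
    exact h2Q this.symm
  have h3F : (3:F) ≠ 0 := by
    intro h
    have := hcoe3
    rw [h, ZeroMemClass.coe_zero] at this
    norm_num at this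
  -- membership of orbit elements
  have hmem : ∀ k, 3 ≤ k → k ≤ n → (s k).1 ∈ F ∧ (s k).2 ∈ F := by
    have key : ∀ d k, k + d = n → 3 ≤ k → (s k).1 ∈ F ∧ (s k).2 ∈ F := by
      intro d
      induction d with
      | zero =>
        intro k hk _
        rw [Nat.add_zero] at hk
        subst hk
        exact ⟨IntermediateField.subset_adjoin _ _ (Set.mem_insert _ _),
          IntermediateField.subset_adjoin _ _ (Set.mem_insert_of_mem _ rfl)⟩
      | succ d ih =>
        intro k hk h3k
        obtain ⟨hx1, hy1⟩ := ih (k+1) (by omega) (by omega)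
        obtain ⟨hy0, hxrec, hyrec⟩ := hrec (k+1) (by omega)
        rw [show k+1-1 = k from by omega] at hxrec hyrec
        have h2mem : (2:Qbar) ∈ F := by
          rw [← hcoe2]; exact SetLike.coe_mem _
        constructor
        · rw [hxrec]
          exact F.sub_mem (F.div_mem (pow_mem hx1 4) (pow_mem hy1 2)) (F.inv_mem h2mem)
        · rw [hyrec]; exact hx1
    intro k h3k hkn
    exact key (n - k) k (by omega) h3k
  have hmemα : α ∈ F := by
    rw [← h3x]; exact (hmem 3 (by omega) (by omega)).1
  -- the elements of F
  obtain ⟨aF, haF⟩ : ∃ x : F, (x : Qbar) = α := ⟨⟨α, hmemα⟩, rfl⟩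
  obtain ⟨gF, hgFc⟩ : ∃ x : F, (x : Qbar) = 2*α - 1 := by
    refine ⟨2*aF - 1, ?_⟩
    push_cast [hcoe2, haF]
    ring
  obtain ⟨u, hu⟩ : ∃ u : ℕ → F, ∀ k, 3 ≤ k → k ≤ n → ((u k : F) : Qbar) = (s k).2 :=
    ⟨fun k => if h : 3 ≤ k ∧ k ≤ n then ⟨(s k).2, (hmem k h.1 h.2).2⟩ else 1,
      fun k h1 h2 => by simp only [dif_pos (⟨h1, h2⟩ : 3 ≤ k ∧ k ≤ n)]⟩
  have hune : ∀ k, 3 ≤ k → k ≤ n → u k ≠ 0 := by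
    intro k h1 h2 h0
    exact hsy k h1 (by rw [← hu k h1 h2, h0, ZeroMemClass.coe_zero])
  have haFne : aF ≠ 0 := by
    intro h
    exact hαne (by rw [← haF, h, ZeroMemClass.coe_zero])
  have hgFne : gF ≠ 0 := by
    intro h
    have := hgQ
    rw [← hgFc, h, ZeroMemClass.coe_zero] at this
    norm_num at this
  have hgFsq : gF^2 = (3:F) := by
    apply hinj
    push_cast [hgFc, hcoe3]
    exact hgQ
  -- the relations in F
  have RF3 : (u 3)^2 * ((2:F)⁻¹ - aF) = aF^4 := by
    apply hinj
    push_cast [hu 3 (by omega) (by omega), IntermediateField.coe_inv, hcoe2, haF]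
    exact RQ3
  have RF4 : (u 4)^2 * (aF + (2:F)⁻¹) = (u 3)^4 := by
    apply hinj
    push_cast [hu 4 (by omega) (by omega), hu 3 (by omega) (by omega),
      IntermediateField.coe_inv, hcoe2, haF]
    exact RQ4
  have RF : ∀ k, 5 ≤ k → k ≤ n → (u k)^2 * (u (k-2) + (2:F)⁻¹) = (u (k-1))^4 := by
    intro k h5 hkn
    apply hinj
    push_cast [hu k (by omega) hkn, hu (k-2) (by omega) (by omega),
      hu (k-1) (by omega) (by omega), IntermediateField.coe_inv, hcoe2]
    exact RQ k h5
  -- the prime above 3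
  obtain ⟨Mx, hMmax, hMle⟩ := Ideal.exists_le_maximal _ (span_three_ne_top F)
  have h3M : (3 : 𝓞 F) ∈ Mx := hMle (Ideal.subset_span rfl)
  have h3O : (3 : 𝓞 F) ≠ 0 := by
    intro h
    have := congrArg (algebraMap (𝓞 F) F) h
    rw [map_ofNat, map_zero] at this
    exact h3F this
  have h2O : (2 : 𝓞 F) ∉ Mx := by
    intro h2M
    have h1M : (1 : 𝓞 F) ∈ Mx := by
      have := Mx.sub_mem h3M h2M
      norm_num at this
      exact this
    exact hMmax.ne_top ((Ideal.eq_top_iff_one _).mpr h1M)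
  set P : HeightOneSpectrum (𝓞 F) :=
    ⟨Mx, hMmax.isPrime, by
      intro hbot
      rw [hbot] at h3M
      exact h3O ((Ideal.mem_bot).mp h3M)⟩ with hPdef
  set v0 := (P.valuation F : Valuation F (WithZero (Multiplicative ℤ))) with hv0def
  -- values of the valuation
  have hW2 : WVal v0 (2:F) = 0 := by
    have hb2 : algebraMap (𝓞 F) F (2 : 𝓞 F) = (2:F) := map_ofNat _ 2
    have hle := intValuation_le_one P (2 : 𝓞 F)
    have hnlt : ¬ P.intValuationDef (2 : 𝓞 F) < 1 := by
      intro hlt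
      exact h2O (Ideal.dvd_span_singleton.mp ((intValuation_lt_one_iff_dvd P _).mp hlt))
    have hv2 : v0 (2:F) = 1 := by
      rw [hv0def, ← hb2, valuation_of_algebraMap, intValuation_apply]
      exact le_antisymm hle (not_lt.mp hnlt)
    refine WVal_eq_of_v v0 h2F ?_
    rw [hv2, neg_zero, ofAdd_zero, WithZero.coe_one]
  have hv3lt : v0 (3:F) < 1 := by
    have hb3 : algebraMap (𝓞 F) F (3 : 𝓞 F) = (3:F) := map_ofNat _ 3
    rw [hv0def, ← hb3, valuation_of_algebraMap, intValuation_apply]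
    exact (intValuation_lt_one_iff_dvd P _).mpr (Ideal.dvd_span_singleton.mpr h3M)
  have hW3pos : 1 ≤ WVal v0 (3:F) := by
    rw [WVal_spec v0 h3F, ← WithZero.coe_one, WithZero.coe_lt_coe, ← ofAdd_zero, ofAdd_lt]
      at hv3lt
    omega
  have hWg2 : 2 * WVal v0 gF = WVal v0 (3:F) := by
    have h := congrArg (WVal v0) hgFsq
    rw [WVal_pow v0 hgFne 2] at h
    push_cast at h
    omega
  have hgpos : 1 ≤ WVal v0 gF := by omega
  -- W(aF)=0
  have hid1 : (1:F) + gF = aF * 2 := by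
    apply hinj
    push_cast [hgFc, haF, hcoe2]
    ring
  have h1g := WVal_add v0 one_ne_zero hgFne (by rw [WVal_one]; omega)
  have hWaF : WVal v0 aF = 0 := by
    have hmul := WVal_mul v0 haFne h2F
    rw [← hid1, h1g.2, WVal_one, hW2] at hmul
    omega
  -- W(2⁻¹)=0
  have hWhf : WVal v0 ((2:F)⁻¹) = 0 := by
    rw [WVal_inv v0 h2F, hW2, neg_zero]
  have hhfne : (2:F)⁻¹ ≠ 0 := inv_ne_zero h2F
  -- W(2⁻¹ - aF) = W gF
  have hidsub : ((2:F)⁻¹ - aF) * 2 = -gF := by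
    apply hinj
    push_cast [IntermediateField.coe_inv, hcoe2, haF, hgFc]
    linear_combination h2Q'
  have hsubne : (2:F)⁻¹ - aF ≠ 0 := by
    intro h
    apply hhalfα
    have := congrArg ((↑) : F → Qbar) h
    push_cast [IntermediateField.coe_inv, hcoe2, haF] at this
    exact this
  have hWsub : WVal v0 ((2:F)⁻¹ - aF) = WVal v0 gF := by
    have hm := WVal_mul v0 hsubne h2F
    rw [hidsub, WVal_neg, hW2] at hm
    omega
  -- W(aF + 2⁻¹) = 0
  have hidadd : (aF + (2:F)⁻¹) * 2 = gF + 2 := by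
    apply hinj
    push_cast [IntermediateField.coe_inv, hcoe2, haF, hgFc]
    linear_combination h2Q'
  have h2g := WVal_add v0 h2F hgFne (by rw [hW2]; omega)
  have haddne : aF + (2:F)⁻¹ ≠ 0 := by
    intro h
    apply h2g.1
    have : gF + 2 = 0 := by rw [← hidadd, h, zero_mul]
    rw [add_comm] at this
    exact this
  have hWadd : WVal v0 (aF + (2:F)⁻¹) = 0 := by
    have hm := WVal_mul v0 haddne h2F
    rw [hidadd, add_comm gF (2:F), h2g.2, hW2] at hm
    omega
  -- general valuation relation
  have hWrel : ∀ x w y : F, x ≠ 0 → w ≠ 0 → y ≠ 0 → x^2*w = y^4 →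
      2 * WVal v0 x + WVal v0 w = 4 * WVal v0 y := by
    intro x w y hx hw hy hr
    have h1 : WVal v0 (x^2*w) = WVal v0 (y^4) := by rw [hr]
    rw [WVal_mul v0 (pow_ne_zero 2 hx) hw, WVal_pow v0 hx 2, WVal_pow v0 hy 4] at h1
    push_cast at h1
    omega
  -- the main induction
  have main : ∀ j, 3 ≤ j → j ≤ n →
      ((WVal v0 (u j) : ℚ)) = -((WVal v0 gF : ℚ)) * rho (j-2) := by
    intro j
    induction j using Nat.strong_induction_on with
    | _ j ih =>
      intro h3j hjn
      rcases Nat.lt_or_ge j 5 with h5 | h5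
      · interval_cases j
        · -- j = 3
          have h := hWrel (u 3) ((2:F)⁻¹ - aF) aF (hune 3 (by omega) (by omega)) hsubne
            haFne RF3
          rw [hWsub, hWaF] at h
          have hq : (2:ℚ) * (WVal v0 (u 3) : ℚ) + (WVal v0 gF : ℚ) = 0 := by
            exact_mod_cast h
          rw [show (3:ℕ)-2 = 1 from rfl, show rho 1 = 1/2 from rfl]
          linarith
        · -- j = 4
          have h := hWrel (u 4) (aF + (2:F)⁻¹) (u 3) (hune 4 (by omega) (by omega)) haddne
            (hune 3 (by omega) (by omega)) RF4
          rw [hWadd] at h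
          have ih3 := ih 3 (by omega) (by omega) (by omega)
          rw [show (3:ℕ)-2 = 1 from rfl, show rho 1 = 1/2 from rfl] at ih3
          have h' : 2 * WVal v0 (u 4) = 4 * WVal v0 (u 3) := by omega
          have hq : (2:ℚ) * (WVal v0 (u 4) : ℚ) = 4 * (WVal v0 (u 3) : ℚ) := by
            exact_mod_cast h'
          rw [show (4:ℕ)-2 = 2 from rfl, show rho 2 = 1 from by norm_num [rho]]
          linarith
      · -- j ≥ 5
        obtain ⟨i, rfl⟩ : ∃ i, j = i + 5 := ⟨j - 5, by omega⟩
        have ih1 := ih (i+4) (by omega) (by omega) (by omega)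
        have ih2 := ih (i+3) (by omega) (by omega) (by omega)
        rw [show i+4-2 = i+2 from by omega] at ih1
        rw [show i+3-2 = i+1 from by omega] at ih2
        have hrpos : 0 < rho (i+1) := (rho_pos_mono i).1
        have hWneg : WVal v0 (u (i+3)) < 0 := by
          have hq : ((WVal v0 (u (i+3)) : ℚ)) < 0 := by
            rw [ih2]
            apply mul_neg_of_neg_of_pos _ hrpos
            have : (1:ℚ) ≤ (WVal v0 gF : ℚ) := by exact_mod_cast hgpos
            linarith
          exact_mod_cast hq
        have RFj := RF (i+5) (by omega) hjn
        rw [show i+5-2 = i+3 from by omega, show i+5-1 = i+4 from by omega] at RFj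
        have hadd := WVal_add v0 (hune (i+3) (by omega) (by omega)) hhfne
          (by rw [hWhf]; exact hWneg)
        have h := hWrel (u (i+5)) (u (i+3) + (2:F)⁻¹) (u (i+4)) (hune (i+5) (by omega) hjn)
          hadd.1 (hune (i+4) (by omega) (by omega)) RFj
        rw [hadd.2] at h
        have hq : (2:ℚ) * (WVal v0 (u (i+5)) : ℚ) + (WVal v0 (u (i+3)) : ℚ)
            = 4 * (WVal v0 (u (i+4)) : ℚ) := by exact_mod_cast h
        rw [ih1, ih2] at hq
        rw [show i+5-2 = i+3 from by omega,
          show rho (i+3) = 2 * rho (i+2) - rho (i+1) / 2 from by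
            rw [show i+3 = (i+1)+2 from rfl, rho]]
        linear_combination hq / 2
  -- extract 2-divisibility of W gF
  obtain ⟨a, b, hb, -, hbeq⟩ := rho_parity (N+1)
  have hcl := main (2*N+5) (by omega) (by omega)
  rw [show 2*N+5-2 = 2*(N+1)+1 from by omega, hbeq] at hcl
  have hZ : (2:ℤ)^(N+2) * WVal v0 (u (2*N+5)) = -(WVal v0 gF * b) := by
    have hq : ((2:ℚ))^(N+2) * ((WVal v0 (u (2*N+5)) : ℚ)) = -((WVal v0 gF : ℚ) * (b:ℚ)) := by
      rw [hcl]
      rw [show ((N:ℕ)+1+1 : ℕ) = N+2 from rfl]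
      field_simp
    exact_mod_cast hq
  have hdvd : (2:ℤ)^(N+2) ∣ WVal v0 gF * b := by
    refine ⟨-(WVal v0 (u (2*N+5))), ?_⟩
    linarith
  have hcop : IsCoprime ((2:ℤ)^(N+2)) b := by
    apply IsCoprime.pow_left
    rw [Int.isCoprime_iff_gcd_eq_one]
    have hodd : Odd b.natAbs := Int.natAbs_odd.mpr hb
    have hmod := Nat.odd_iff.mp hodd
    have : ¬ (2 ∣ b.natAbs) := by omega
    exact (Nat.Prime.coprime_iff_not_dvd Nat.prime_two).mpr this
  have hdg : (2:ℤ)^(N+2) ∣ WVal v0 gF := hcop.dvd_of_dvd_mul_right hdvd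
  have hge : (2:ℤ)^(N+2) ≤ WVal v0 gF := Int.le_of_dvd (by omega) hdg
  have hW3ge : (2:ℤ)^(N+3) ≤ WVal v0 (3:F) := by
    rw [← hWg2]
    calc (2:ℤ)^(N+3) = 2 * 2^(N+2) := by ring
    _ ≤ 2 * WVal v0 gF := by linarith
  -- ramification bound
  set e := (WVal v0 (3:F)).toNat with hedef
  have hetoNat : ((e:ℕ) : ℤ) = WVal v0 (3:F) := Int.toNat_of_nonneg (by omega)
  have hdvd3 : P.asIdeal ^ e ∣ Ideal.span {(3 : 𝓞 F)} := by
    rw [← intValuation_le_pow_iff_dvd]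
    have hb3 : algebraMap (𝓞 F) F (3 : 𝓞 F) = (3:F) := map_ofNat _ 3
    have hvv : v0 (3:F) = P.intValuationDef (3 : 𝓞 F) := by
      rw [hv0def, ← hb3, valuation_of_algebraMap, intValuation_apply]
    rw [intValuation_apply, ← hvv, WVal_spec v0 h3F, hetoNat]
    exact le_rfl
  have hfin : e ≤ Module.finrank ℚ F := ram_le_finrank F P e hdvd3
  have hNN : (N:ℕ) < 2^(N+3) :=
    lt_of_lt_of_le (Nat.lt_two_pow_self (n := N)) (Nat.pow_le_pow_right (by norm_num) (by omega))
  have hNe : (N:ℤ) < (e:ℤ) := by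
    calc (N:ℤ) < 2^(N+3) := by exact_mod_cast hNN
    _ ≤ WVal v0 (3:F) := hW3ge
    _ = (e:ℤ) := hetoNat.symm
  have hNn : N < e := by exact_mod_cast hNe
  omega
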